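/- Let T be the DL-Lite_R TBox {Vertex ⊑ ∃hasColour, hasColour ⊑ Assign} and q(w) the rooted CQ ∃x,y,z,k,l. Edge(x,y) ∧ hasColour(x,z) ∧ hasColour(y,z) ∧ Assign(x,w) ∧ Assign(y,w) ∧ Reachable(x,k) ∧ Assign(k,l). For any finite undirected connected graph G = (V,E) without self-loops, with the vertices of V, a fresh vertex a, and fresh colours r,g,b all pairwise distinct individuals, let A_G be the bag ABox containing (all with multiplicity 1): Vertex(u) for each u ∈ V; Edge(u,v) and Edge(v,u) for each {u,v} ∈ E; Assign(u,r), Assign(u,g), Assign(u,b) for each u ∈ V; Vertex(a), Edge(a,a), hasColour(a,r), Assign(a,r); and Reachable(a,a), Reachable(a,u), Reachable(u,a) for every u ∈ V, and Reachable(u,v), Reachable(v,u) for all distinct u,v ∈ V. Then G is not 3-colourable if and only if the bag certain answer q^{⟨T,A_G⟩}(r) is at least 3·|V| + 2. -/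

import Mathlib

/-!
Common formalization of the bag semantics of DL-Lite ontologies
(Nikolaou et al., "The Bag Semantics of Ontology-Based Data Access").
-/

open scoped Classical

noncomputable section

/-- Individuals (constants). -/
abbrev Ind : Type := ℕ
/-- Variables. -/
abbrev Var : Type := ℕ
/-- Atomic concepts (unary predicates). -/
abbrev AtomicConcept : Type := ℕ
/-- Atomic roles (binary predicates). -/
abbrev AtomicRole : Type := ℕ

/-- A role is an atomic role or its inverse. -/
inductive Role where
  | atomic : AtomicRole → Role
  | inv : AtomicRole → Role
  deriving DecidableEq

/-- A concept is an atomic concept or `∃R` for a role `R`. -/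
inductive DLConcept where
  | atomic : AtomicConcept → DLConcept
  | ex : Role → DLConcept
  deriving DecidableEq

/-- TBox axioms: inclusions and disjointness axioms between concepts or roles. -/
inductive TBoxAxiom where
  | cIncl : DLConcept → DLConcept → TBoxAxiom
  | rIncl : Role → Role → TBoxAxiom
  | cDisj : DLConcept → DLConcept → TBoxAxiom
  | rDisj : Role → Role → TBoxAxiom
  deriving DecidableEq

/-- A DL-Lite_R TBox: a finite set of TBox axioms. -/
abbrev TBox : Type := Finset TBoxAxiom

/-- A DL-Lite_core TBox: only concept inclusions and concept disjointness axioms. -/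
def TBox.IsCore (T : TBox) : Prop :=
  ∀ ax ∈ T, (∃ C D, ax = TBoxAxiom.cIncl C D) ∨ (∃ C D, ax = TBoxAxiom.cDisj C D)

/-- ABox assertions. -/
inductive Assertion where
  | conceptA : AtomicConcept → Ind → Assertion
  | roleA : AtomicRole → Ind → Ind → Assertion
  deriving DecidableEq

/-- A bag ABox: a finite bag of assertions (represented as a multiset). -/
abbrev BagABox : Type := Multiset Assertion

/-- Multiplicity of an assertion in a bag ABox, as an extended natural. -/
def BagABox.mult (A : BagABox) (s : Assertion) : ℕ∞ := (A.count s : ℕ∞)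

/-- Sum of an arbitrary family of extended naturals. -/
def bagSum {α : Type*} (f : α → ℕ∞) : ℕ∞ := ⨆ s : Finset α, ∑ x ∈ s, f x

/-- A bag interpretation. -/
structure BagInterp : Type 1 where
  Δ : Type
  dne : Nonempty Δ
  indMap : Ind → Δ
  indInj : Function.Injective indMap
  cI : AtomicConcept → Δ → ℕ∞
  rI : AtomicRole → Δ → Δ → ℕ∞

/-- Extension of the interpretation function to roles. -/
def BagInterp.roleMult (I : BagInterp) : Role → I.Δ → I.Δ → ℕ∞
  | Role.atomic P => fun u v => I.rI P u v
  | Role.inv P => fun u v => I.rI P v u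

/-- Extension of the interpretation function to concepts. -/
def BagInterp.conceptMult (I : BagInterp) : DLConcept → I.Δ → ℕ∞
  | DLConcept.atomic A => fun u => I.cI A u
  | DLConcept.ex R => fun u => bagSum (fun v => I.roleMult R u v)

/-- Multiplicity of an assertion in a bag interpretation. -/
def BagInterp.assertMult (I : BagInterp) : Assertion → ℕ∞
  | Assertion.conceptA A a => I.cI A (I.indMap a)
  | Assertion.roleA P a b => I.rI P (I.indMap a) (I.indMap b)

/-- Satisfaction of a TBox axiom by a bag interpretation. -/
def BagInterp.SatisfiesAx (I : BagInterp) : TBoxAxiom → Prop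
  | TBoxAxiom.cIncl C D => ∀ u, I.conceptMult C u ≤ I.conceptMult D u
  | TBoxAxiom.rIncl R S => ∀ u v, I.roleMult R u v ≤ I.roleMult S u v
  | TBoxAxiom.cDisj C D => ∀ u, min (I.conceptMult C u) (I.conceptMult D u) = 0
  | TBoxAxiom.rDisj R S => ∀ u v, min (I.roleMult R u v) (I.roleMult S u v) = 0

/-- A DL-Lite^bag ontology. -/
structure Ontology : Type where
  tbox : TBox
  abox : BagABox

/-- `I` is a bag model of the ontology `K`. -/
def BagInterp.IsModel (I : BagInterp) (K : Ontology) : Prop :=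
  (∀ ax ∈ K.tbox, I.SatisfiesAx ax) ∧
  ∀ s : Assertion, BagABox.mult K.abox s ≤ I.assertMult s

/-- Satisfiability of an ontology under bag semantics. -/
def Ontology.Satisfiable (K : Ontology) : Prop := ∃ I : BagInterp, I.IsModel K

/- ## Conjunctive queries -/

/-- Terms: variables or individuals. -/
inductive Term where
  | var : Var → Term
  | ind : Ind → Term
  deriving DecidableEq

def Term.varsOf : Term → List Var
  | Term.var v => [v]
  | Term.ind _ => []

def Term.indsOf : Term → List Ind
  | Term.var _ => []
  | Term.ind a => [a]

/-- Query atoms: concept atoms, role atoms, and equalities. -/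
inductive QAtom where
  | conceptAt : AtomicConcept → Term → QAtom
  | roleAt : AtomicRole → Term → Term → QAtom
  | eqAt : Var → Term → QAtom
  deriving DecidableEq

def QAtom.terms : QAtom → List Term
  | QAtom.conceptAt _ t => [t]
  | QAtom.roleAt _ t₁ t₂ => [t₁, t₂]
  | QAtom.eqAt z t => [Term.var z, t]

def QAtom.vars : QAtom → List Var
  | QAtom.conceptAt _ t => t.varsOf
  | QAtom.roleAt _ t₁ t₂ => t₁.varsOf ++ t₂.varsOf
  | QAtom.eqAt z t => z :: t.varsOf

/-- A conjunctive query `q(x) = ∃y. φ(x,y)`: a tuple of answer variables,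
a tuple of existential variables, and a conjunction (list, i.e. allowing
repetitions) of atoms. -/
structure CQ : Type where
  answerVars : List Var
  existVars : List Var
  atoms : List QAtom

def CQ.vars (q : CQ) : List Var := q.answerVars ++ q.existVars

/-- Value of a term under a valuation of the variables. -/
def termVal (I : BagInterp) (f : Var → I.Δ) : Term → I.Δ
  | Term.var v => f v
  | Term.ind a => I.indMap a

/-- Multiplicity contributed by an atom under a valuation: for predicate atoms the
multiplicity of the image tuple, for equalities the indicator of satisfaction. -/
def QAtom.mult (I : BagInterp) (f : Var → I.Δ) : QAtom → ℕ∞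
  | QAtom.conceptAt A t => I.cI A (termVal I f t)
  | QAtom.roleAt P t₁ t₂ => I.rI P (termVal I f t₁) (termVal I f t₂)
  | QAtom.eqAt z t => if f z = termVal I f t then 1 else 0

/-- The bag answers `q^I(ā)`: the sum, over all valuations of the variables of `q`
mapping the answer variables to `ā` (valuations are normalized to a fixed junk
value outside the variables of `q`), of the product of the multiplicities of the
atom occurrences of `q`. -/
def CQ.bagAnswer (q : CQ) (I : BagInterp) (a : List Ind) : ℕ∞ :=
  bagSum (fun f : {f : Var → I.Δ //
      (∀ v, v ∉ q.vars → f v = I.indMap 0) ∧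
      q.answerVars.map f = a.map I.indMap} =>
    (q.atoms.map (QAtom.mult I f.1)).prod)

/-- Bag certain answers: pointwise minimum over all bag models. -/
def bagCertain (K : Ontology) (q : CQ) (a : List Ind) : ℕ∞ :=
  ⨅ (I : BagInterp) (_ : I.IsModel K), q.bagAnswer I a

/-- Base relation of the equivalence relation generated by the equality atoms. -/
def CQ.eqBase (q : CQ) : Term → Term → Prop := fun t₁ t₂ =>
  ∃ z t, QAtom.eqAt z t ∈ q.atoms ∧ t₁ = Term.var z ∧ t₂ = t

/-- Equivalence of terms generated by the equality atoms of `q`. -/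
def CQ.eqRel (q : CQ) : Term → Term → Prop := Relation.EqvGen q.eqBase

/-- Safety: the class of every variable contains a term occurring in a
non-equality atom. -/
def CQ.Safe (q : CQ) : Prop :=
  ∀ v ∈ q.vars, ∃ t : Term, ∃ atm ∈ q.atoms,
    (∀ z s, atm ≠ QAtom.eqAt z s) ∧ t ∈ QAtom.terms atm ∧ q.eqRel (Term.var v) t

/-- Well-formedness of CQs: repetition-free disjoint tuples of variables, all
variables of the atoms among the declared variables, and safety. -/
def CQ.WellFormed (q : CQ) : Prop :=
  q.answerVars.Nodup ∧ q.existVars.Nodup ∧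
  (∀ v ∈ q.answerVars, v ∉ q.existVars) ∧
  (∀ atm ∈ q.atoms, ∀ v ∈ QAtom.vars atm, v ∈ q.vars) ∧
  q.Safe

def CQ.mentionsTerm (q : CQ) (t : Term) : Prop := ∃ atm ∈ q.atoms, t ∈ QAtom.terms atm

/-- Adjacency in the Gaifman graph of `q` (on terms; equality atoms merge the
classes of their two terms, which for connectivity purposes is the same as
making them adjacent). -/
def CQ.gaifmanAdj (q : CQ) : Term → Term → Prop := fun t₁ t₂ =>
  ∃ atm ∈ q.atoms, t₁ ∈ QAtom.terms atm ∧ t₂ ∈ QAtom.terms atm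

/-- A CQ is rooted if every connected component of its Gaifman graph contains
an answer variable or an individual. -/
def CQ.Rooted (q : CQ) : Prop :=
  ∀ t : Term, q.mentionsTerm t →
    ∃ t' : Term, Relation.ReflTransGen q.gaifmanAdj t t' ∧
      ((∃ v ∈ q.answerVars, t' = Term.var v) ∨ ∃ a : Ind, t' = Term.ind a)

/- ## Set semantics -/

/-- A classical (set) interpretation. -/
structure SetInterp : Type 1 where
  Δ : Type
  dne : Nonempty Δ
  indMap : Ind → Δ
  indInj : Function.Injective indMap
  cI : AtomicConcept → Set Δ
  rI : AtomicRole → Set (Δ × Δ)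

def SetInterp.roleSet (I : SetInterp) : Role → Set (I.Δ × I.Δ)
  | Role.atomic P => I.rI P
  | Role.inv P => {p | (p.2, p.1) ∈ I.rI P}

def SetInterp.conceptSet (I : SetInterp) : DLConcept → Set I.Δ
  | DLConcept.atomic A => I.cI A
  | DLConcept.ex R => {u | ∃ v, (u, v) ∈ I.roleSet R}

def SetInterp.SatisfiesAx (I : SetInterp) : TBoxAxiom → Prop
  | TBoxAxiom.cIncl C D => I.conceptSet C ⊆ I.conceptSet D
  | TBoxAxiom.rIncl R S => I.roleSet R ⊆ I.roleSet S
  | TBoxAxiom.cDisj C D => I.conceptSet C ∩ I.conceptSet D = ∅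
  | TBoxAxiom.rDisj R S => I.roleSet R ∩ I.roleSet S = ∅

def SetInterp.SatisfiesAssertion (I : SetInterp) : Assertion → Prop
  | Assertion.conceptA A a => I.indMap a ∈ I.cI A
  | Assertion.roleA P a b => (I.indMap a, I.indMap b) ∈ I.rI P

/-- `I` is a (set) model of the TBox `T` and the set ABox `A`. -/
def SetInterp.IsModelOf (I : SetInterp) (T : TBox) (A : Finset Assertion) : Prop :=
  (∀ ax ∈ T, I.SatisfiesAx ax) ∧ ∀ s ∈ A, I.SatisfiesAssertion s

def setTermVal (I : SetInterp) (f : Var → I.Δ) : Term → I.Δ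
  | Term.var v => f v
  | Term.ind a => I.indMap a

def SetInterp.SatAtom (I : SetInterp) (f : Var → I.Δ) : QAtom → Prop
  | QAtom.conceptAt A t => setTermVal I f t ∈ I.cI A
  | QAtom.roleAt P t₁ t₂ => (setTermVal I f t₁, setTermVal I f t₂) ∈ I.rI P
  | QAtom.eqAt z t => f z = setTermVal I f t

/-- `q(ā)` holds in the set interpretation `I`. -/
def SetInterp.SatCQ (I : SetInterp) (q : CQ) (a : List Ind) : Prop :=
  ∃ f : Var → I.Δ, q.answerVars.map f = a.map I.indMap ∧ ∀ atm ∈ q.atoms, I.SatAtom f atm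

/-- Entailment of a concept inclusion from a TBox (standard set semantics). -/
def TBox.EntailsCI (T : TBox) (C D : DLConcept) : Prop :=
  ∀ I : SetInterp, (∀ ax ∈ T, I.SatisfiesAx ax) → I.conceptSet C ⊆ I.conceptSet D

/- ## The canonical bag model -/

/-- Domain elements of the canonical model: individuals and anonymous elements
`w^j_{u,R}`. -/
inductive CanElem where
  | ind : Ind → CanElem
  | anon : CanElem → Role → ℕ → CanElem
  deriving DecidableEq

def CanElem.isAnon : CanElem → Prop
  | CanElem.ind _ => False
  | CanElem.anon _ _ _ => True

/-- A stage of the canonical-model construction: a set of active elements and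
bag interpretations of the predicates. -/
structure PreInterp : Type where
  active : Set CanElem
  c : AtomicConcept → CanElem → ℕ∞
  r : AtomicRole → CanElem → CanElem → ℕ∞

def PreInterp.toInterp (P : PreInterp) : BagInterp where
  Δ := CanElem
  dne := ⟨CanElem.ind 0⟩
  indMap := CanElem.ind
  indInj := fun a b h => by cases h; rfl
  cI := P.c
  rI := P.r

/-- Concept closure: `ccl(u,I,T)(C)` is the supremum of `C₀^I(u)` over all
concepts `C₀` with `T ⊨ C₀ ⊑ C`. -/
def cclI (T : TBox) (I : BagInterp) (C : DLConcept) (u : I.Δ) : ℕ∞ :=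
  ⨆ C₀ : {C₀ : DLConcept // TBox.EntailsCI T C₀ C}, I.conceptMult C₀.1 u

def PreInterp.ccl (P : PreInterp) (T : TBox) (u : CanElem) (C : DLConcept) : ℕ∞ :=
  cclI T P.toInterp C u

/-- `δ = ccl(u,C_{i-1},T)(∃R) − (∃R)^{C_{i-1}}(u)` (truncated subtraction). -/
def PreInterp.delta (P : PreInterp) (T : TBox) (u : CanElem) (R : Role) : ℕ∞ :=
  P.ccl T u (DLConcept.ex R) - P.toInterp.conceptMult (DLConcept.ex R) u

/-- The anonymous elements freshly added when stepping from `P`. -/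
def PreInterp.NewAnon (P : PreInterp) (T : TBox) (w : CanElem) : Prop :=
  ∃ u R j, w = CanElem.anon u R j ∧ u ∈ P.active ∧ (j : ℕ∞) < P.delta T u R

/-- One step of the canonical-model construction. -/
def PreInterp.step (P : PreInterp) (T : TBox) : PreInterp where
  active := P.active ∪ {w | P.NewAnon T w}
  c := fun A u => if u ∈ P.active then P.ccl T u (DLConcept.atomic A) else 0
  r := fun P₀ u v =>
    if u ∈ P.active ∧ v ∈ P.active then P.r P₀ u v
    else if ∃ j, v = CanElem.anon u (Role.atomic P₀) j ∧ P.NewAnon T v then 1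
    else if ∃ j, u = CanElem.anon v (Role.inv P₀) j ∧ P.NewAnon T u then 1
    else 0

/-- The stages `C_i(K)` of the canonical bag model. -/
def canStage (K : Ontology) : ℕ → PreInterp
  | 0 =>
    { active := Set.range CanElem.ind
      c := fun A u =>
        match u with
        | CanElem.ind a => BagABox.mult K.abox (Assertion.conceptA A a)
        | _ => 0
      r := fun P u v =>
        match u, v with
        | CanElem.ind a, CanElem.ind b => BagABox.mult K.abox (Assertion.roleA P a b)
        | _, _ => 0 }
  | (i + 1) => (canStage K i).step K.tbox

/-- The canonical bag model `C(K) = ⋃_{i ≥ 0} C_i(K)` (pointwise maximum). -/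
def canInterp (K : Ontology) : BagInterp where
  Δ := CanElem
  dne := ⟨CanElem.ind 0⟩
  indMap := CanElem.ind
  indInj := fun a b h => by cases h; rfl
  cI := fun A u => ⨆ i, (canStage K i).c A u
  rI := fun P u v => ⨆ i, (canStage K i).r P u v

/-- The canonical bag model `C(⟨∅,A⟩)` of the ontology with empty TBox:
individuals as domain, every predicate interpreted by its ABox bag. -/
def emptyCanInterp (A : BagABox) : BagInterp where
  Δ := Ind
  dne := ⟨0⟩
  indMap := id
  indInj := fun _ _ h => h
  cI := fun C a => BagABox.mult A (Assertion.conceptA C a)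
  rI := fun P a b => BagABox.mult A (Assertion.roleA P a b)

/-- `[q,z]^{C(K)}`: bag answers over the canonical model computed only over
valuations sending the variables of `z` to anonymous elements and the remaining
existential variables to individuals. -/
def CQ.restrictedAnswer (q : CQ) (K : Ontology) (z : Finset Var) (a : List Ind) : ℕ∞ :=
  bagSum (fun f : {f : Var → CanElem //
      (∀ v, v ∉ q.vars → f v = CanElem.ind 0) ∧
      q.answerVars.map f = a.map CanElem.ind ∧
      ∀ v ∈ q.existVars, (v ∈ z → CanElem.isAnon (f v)) ∧ (v ∉ z → ∃ b : Ind, f v = CanElem.ind b)} =>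
    (q.atoms.map (QAtom.mult (canInterp K) f.1)).prod)

/- ## Ma-connected subsets, realisability, and the per-`z` rewritten query -/

/-- `t` is a variable belonging to `z`. -/
def Term.IsZVar (t : Term) (z : Finset Var) : Prop := ∃ v ∈ z, t = Term.var v

/-- Adjacency in the Gaifman graph restricted to nodes that are variables of `z`. -/
def CQ.zAdj (q : CQ) (z : Finset Var) : Term → Term → Prop := fun t₁ t₂ =>
  q.gaifmanAdj t₁ t₂ ∧ t₁.IsZVar z ∧ t₂.IsZVar z

/-- `z'` is maximally connected in the anonymous part (ma-connected) within `z`. -/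
def CQ.MAConnected (q : CQ) (z z' : Finset Var) : Prop :=
  z' ⊆ z ∧
  (∀ v ∈ z', ∀ w ∈ z, Relation.ReflTransGen (q.zAdj z) (Term.var v) (Term.var w) → w ∈ z') ∧
  (∀ v ∈ z', ∀ w ∈ z', Relation.ReflTransGen (q.zAdj z) (Term.var v) (Term.var w))

/-- `φ_{z'}`: the subconjunction of all atoms of `q` mentioning a variable of `z'`. -/
def CQ.subAtoms (q : CQ) (z' : Finset Var) : List QAtom :=
  q.atoms.filter (fun atm => decide (∃ v ∈ z', v ∈ QAtom.vars atm))

def termsOfList (l : List QAtom) : List Term :=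
  l.foldr (fun atm acc => QAtom.terms atm ++ acc) []

/-- `t_{z'}`: all terms occurring in `φ_{z'}` that are not variables of `z`. -/
def CQ.tTerms (q : CQ) (z z' : Finset Var) : List Term :=
  (termsOfList (q.subAtoms z')).filter (fun t => decide (¬ t.IsZVar z))

/-- `atm` is a legitimate choice of `α_{z'}`: an atom of `φ_{z'}` of the form
`P(t,z)` or `P(z,t)` with `z ∈ z'` and the term `t` not a variable of `z`. -/
def IsAlphaFor (q : CQ) (z z' : Finset Var) (atm : QAtom) : Prop :=
  atm ∈ q.subAtoms z' ∧
  ((∃ P t v, v ∈ z' ∧ ¬ Term.IsZVar t z ∧ atm = QAtom.roleAt P t (Term.var v)) ∨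
   (∃ P t v, v ∈ z' ∧ ¬ Term.IsZVar t z ∧ atm = QAtom.roleAt P (Term.var v) t))

def CQ.inds (q : CQ) : List Ind :=
  (termsOfList q.atoms).foldr (fun t acc => t.indsOf ++ acc) []

def CQ.maxInd (q : CQ) : Ind := q.inds.foldr max 0

/-- The individual `a` of `q^a_{z'}`: the individual among `t_{z'}` if one
exists, and a fresh individual otherwise. -/
def freshA (q : CQ) (z z' : Finset Var) : Ind :=
  if h : ∃ c : Ind, Term.ind c ∈ q.tTerms z z' then h.choose else q.maxInd + 1

/-- A fresh individual `b` (distinct from `freshA`). -/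
def freshB (q : CQ) : Ind := q.maxInd + 2

/-- The one-assertion bag ABox `A'` used to test realisability: `{P(a,b)}` if
`α_{z'} = P(t,z)` and `{P(b,a)}` if `α_{z'} = P(z,t)`. -/
def alphaABox (z' : Finset Var) (atm : QAtom) (a b : Ind) : BagABox :=
  match atm with
  | QAtom.roleAt P _ t₂ =>
      if Term.IsZVar t₂ z' then {Assertion.roleA P a b} else {Assertion.roleA P b a}
  | _ => 0

def subVars (q : CQ) (z' : Finset Var) : List Var :=
  (q.subAtoms z').foldr (fun atm acc => QAtom.vars atm ++ acc) []

/-- The bag answer `(q^a_{z'})^{C(⟨T,A'⟩)}(⟨⟩)` of the Boolean query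
`q^a_{z'}() = ∃x'.∃z'. φ_{z'} ∧ ⋀_{t ∈ t_{z'}}(t = a) ∧ ⋀_{z ∈ z'}(z ≠ a)`
over the canonical model of `⟨T,A'⟩`. -/
def realQAnswer (T : TBox) (q : CQ) (z z' : Finset Var) (atm : QAtom) : ℕ∞ :=
  bagSum (fun f : {f : Var → CanElem //
      (∀ v, v ∉ subVars q z' → f v = CanElem.ind 0) ∧
      (∀ t ∈ q.tTerms z z',
        termVal (canInterp ⟨T, alphaABox z' atm (freshA q z z') (freshB q)⟩) f t
          = CanElem.ind (freshA q z z')) ∧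
      ∀ v ∈ z', f v ≠ CanElem.ind (freshA q z z')} =>
    ((q.subAtoms z').map
      (QAtom.mult (canInterp ⟨T, alphaABox z' atm (freshA q z z') (freshB q)⟩) f.1)).prod)

/-- Equality-consistency of `z`: no equality atom `z = t` with `z ∈ z` and `t ∉ z`. -/
def EqConsistent (q : CQ) (z : Finset Var) : Prop :=
  ∀ v t, QAtom.eqAt v t ∈ q.atoms → v ∈ z → Term.IsZVar t z

/-- The ma-connected subset `z'` is realisable by `T` (w.r.t. the chosen `α_{z'}`). -/
def RealisableMA (T : TBox) (q : CQ) (z z' : Finset Var) (atm : QAtom) : Prop :=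
  1 ≤ realQAnswer T q z z' atm

/-- `z` is realisable by `T`: equality-consistent and every nonempty
ma-connected subset of `z` is realisable. -/
def RealisableZ (T : TBox) (q : CQ) (z : Finset Var) (alpha : Finset Var → QAtom) : Prop :=
  EqConsistent q z ∧
  ∀ z' : Finset Var, q.MAConnected z z' → z'.Nonempty → RealisableMA T q z z' (alpha z')

/-- The nonempty ma-connected subsets of `z`. -/
def maSets (q : CQ) (z : Finset Var) : Finset (Finset Var) :=
  z.powerset.filter (fun z' => q.MAConnected z z' ∧ z'.Nonempty)

def tTermVars (q : CQ) (z z' : Finset Var) : List Var :=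
  (q.tTerms z z').foldr (fun t acc => Term.varsOf t ++ acc) []

/-- The equalities identifying all the terms of `t_{z'}`. -/
def eqAtomsFor (q : CQ) (z z' : Finset Var) : List QAtom :=
  (tTermVars q z z').foldr
    (fun v acc => ((q.tTerms z z').map (fun t => QAtom.eqAt v t)) ++ acc) []

/-- Atoms of `q_z`: the atoms of `q` not mentioning a variable of `z`, plus,
for each nonempty ma-connected `z' ⊆ z`, the atom `α_{z'}` together with the
equalities identifying the terms of `t_{z'}`. -/
def qzAtoms (q : CQ) (z : Finset Var) (alpha : Finset Var → QAtom) : List QAtom :=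
  q.atoms.filter (fun atm => decide (¬ ∃ v ∈ z, v ∈ QAtom.vars atm))
    ++ (maSets q z).toList.foldr (fun z' acc => alpha z' :: (eqAtomsFor q z z' ++ acc)) []

/-- The CQ `q_z(x) = ∃y'. φ_z(x,y')`. -/
def qz (q : CQ) (z : Finset Var) (alpha : Finset Var → QAtom) : CQ where
  answerVars := q.answerVars
  existVars := q.existVars.filter (fun v => decide (∃ atm ∈ qzAtoms q z alpha, v ∈ QAtom.vars atm))
  atoms := qzAtoms q z alpha

/- ## The BALG rewriting `q̄` -/

/-- Value of an atom of `q_z` after the rewriting step 3 (`chasing back'' with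
the TBox): concept atoms `A(t)` become `⋁_{T ⊨ C ⊑ A} ζ_C(t)`, role atoms with a
`z`-variable become the corresponding truncated difference, and the remaining
atoms are evaluated as before. -/
def rewAtomVal (T : TBox) (I : BagInterp) (z : Finset Var) (f : Var → I.Δ) : QAtom → ℕ∞
  | QAtom.conceptAt A t => cclI T I (DLConcept.atomic A) (termVal I f t)
  | QAtom.roleAt P t₁ t₂ =>
      if Term.IsZVar t₂ z then
        cclI T I (DLConcept.ex (Role.atomic P)) (termVal I f t₁)
          - I.conceptMult (DLConcept.ex (Role.atomic P)) (termVal I f t₁)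
      else if Term.IsZVar t₁ z then
        cclI T I (DLConcept.ex (Role.inv P)) (termVal I f t₂)
          - I.conceptMult (DLConcept.ex (Role.inv P)) (termVal I f t₂)
      else I.rI P (termVal I f t₁) (termVal I f t₂)
  | QAtom.eqAt v t => if f v = termVal I f t then 1 else 0

/-- Bag answers of the BALG query `q̄_z`, obtained from `q_z` by projecting only
the variables of `y' ∖ z` and replacing atoms as in `rewAtomVal`. -/
def rewAnswer (T : TBox) (qq : CQ) (z : Finset Var) (I : BagInterp) (a : List Ind) : ℕ∞ :=
  bagSum (fun f : {f : Var → I.Δ //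
      (∀ v, v ∉ qq.answerVars ++ qq.existVars.filter (fun u => decide (u ∉ z)) →
        f v = I.indMap 0) ∧
      qq.answerVars.map f = a.map I.indMap} =>
    (qq.atoms.map (rewAtomVal T I z f.1)).prod)

/- ## BALG¹_ε queries -/

def Term.fvars (t : Term) : Finset Var :=
  match t with
  | Term.var v => {v}
  | Term.ind _ => ∅

/-- Syntax of BALG¹_ε queries. -/
inductive BQuery where
  | atomC : AtomicConcept → Term → BQuery
  | atomR : AtomicRole → Term → Term → BQuery
  | conj : BQuery → BQuery → BQuery
  | eqSel : BQuery → Var → Term → BQuery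
  | proj : List Var → BQuery → BQuery
  | maxU : BQuery → BQuery → BQuery
  | arithU : BQuery → BQuery → BQuery
  | diff : BQuery → BQuery → BQuery

/-- Answer variables of a BALG¹_ε query. -/
def BQuery.fv : BQuery → Finset Var
  | BQuery.atomC _ t => t.fvars
  | BQuery.atomR _ t₁ t₂ => t₁.fvars ∪ t₂.fvars
  | BQuery.conj q₁ q₂ => q₁.fv ∪ q₂.fv
  | BQuery.eqSel q _ t => q.fv ∪ t.fvars
  | BQuery.proj ys q => q.fv \ ys.toFinset
  | BQuery.maxU q₁ _ => q₁.fv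
  | BQuery.arithU q₁ _ => q₁.fv
  | BQuery.diff q₁ _ => q₁.fv

/-- Well-formedness of BALG¹_ε queries. -/
def BQuery.WF : BQuery → Prop
  | BQuery.atomC _ _ => True
  | BQuery.atomR _ _ _ => True
  | BQuery.conj q₁ q₂ => q₁.WF ∧ q₂.WF
  | BQuery.eqSel q x _ => q.WF ∧ x ∈ q.fv
  | BQuery.proj _ q => q.WF
  | BQuery.maxU q₁ q₂ => q₁.WF ∧ q₂.WF ∧ q₁.fv = q₂.fv
  | BQuery.arithU q₁ q₂ => q₁.WF ∧ q₂.WF ∧ q₁.fv = q₂.fv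
  | BQuery.diff q₁ q₂ => q₁.WF ∧ q₂.WF ∧ q₁.fv = q₂.fv

/-- Semantics of BALG¹_ε queries under a valuation of the answer variables. -/
def BQuery.val (I : BagInterp) : BQuery → (Var → I.Δ) → ℕ∞
  | BQuery.atomC A t, f => I.cI A (termVal I f t)
  | BQuery.atomR P t₁ t₂, f => I.rI P (termVal I f t₁) (termVal I f t₂)
  | BQuery.conj q₁ q₂, f => q₁.val I f * q₂.val I f
  | BQuery.eqSel q x t, f => if f x = termVal I f t then q.val I f else 0
  | BQuery.proj ys q, f => bagSum (fun g : {g : Var → I.Δ // ∀ v, v ∉ ys → g v = f v} => q.val I g.1)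
  | BQuery.maxU q₁ q₂, f => max (q₁.val I f) (q₂.val I f)
  | BQuery.arithU q₁ q₂, f => q₁.val I f + q₂.val I f
  | BQuery.diff q₁ q₂, f => q₁.val I f - q₂.val I f

/-- Bag answers of a BALG¹_ε query with answer variables `xs` on a tuple `a`. -/
def BQuery.answer (Q : BQuery) (xs : List Var) (I : BagInterp) (a : List Ind) : ℕ∞ :=
  if a.length = xs.length then Q.val I (fun v => I.indMap (a.getD (xs.idxOf v) 0)) else 0

/- ## Enumerated bags, e-homomorphisms, and e-valuations -/

/-- Enumerated copies of a bag of domain elements (for an atomic concept). -/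
def EBagC (I : BagInterp) (A : AtomicConcept) : Type :=
  {p : I.Δ × ℕ // 1 ≤ p.2 ∧ (p.2 : ℕ∞) ≤ I.cI A p.1}

/-- Enumerated copies of a bag of pairs (for an atomic role). -/
def EBagR (I : BagInterp) (P : AtomicRole) : Type :=
  {p : (I.Δ × I.Δ) × ℕ // 1 ≤ p.2 ∧ (p.2 : ℕ∞) ≤ I.rI P p.1.1 p.1.2}

/-- An e-homomorphism between the enumerated versions of two bag interpretations. -/
structure EHom (I J : BagInterp) where
  h : I.Δ → J.Δ
  hInd : ∀ a : Ind, h (I.indMap a) = J.indMap a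
  hC : ∀ A : AtomicConcept, EBagC I A → EBagC J A
  hC_fst : ∀ (A : AtomicConcept) (x : EBagC I A), (hC A x).1.1 = h x.1.1
  hR : ∀ P : AtomicRole, EBagR I P → EBagR J P
  hR_fst : ∀ (P : AtomicRole) (x : EBagR I P), (hR P x).1.1 = (h x.1.1.1, h x.1.1.2)

/-- Predicate-injectivity on individuals of an e-homomorphism. -/
def EHom.PredInj {I J : BagInterp} (e : EHom I J) : Prop :=
  ∀ u : I.Δ, (∃ a : Ind, e.h u = J.indMap a) →
    (∀ A : AtomicConcept, ∀ x y : EBagC I A,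
      x.1.1 = u → y.1.1 = u → x.1.2 ≠ y.1.2 → e.hC A x ≠ e.hC A y) ∧
    (∀ P : AtomicRole, ∀ x y : EBagR I P, x.1.1.1 = u → y.1.1.1 = u →
      (x.1.1.2, x.1.2) ≠ (y.1.1.2, y.1.2) → e.hR P x ≠ e.hR P y) ∧
    (∀ P : AtomicRole, ∀ x y : EBagR I P, x.1.1.2 = u → y.1.1.2 = u →
      (x.1.1.1, x.1.2) ≠ (y.1.1.1, y.1.2) → e.hR P x ≠ e.hR P y)

/-- Enumerated atoms of a CQ (seen as a bag of atoms). -/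
def EAtom (q : CQ) : Type := {p : QAtom × ℕ // 1 ≤ p.2 ∧ p.2 ≤ q.atoms.count p.1}

/-- An e-valuation of the enumerated query `q^e` over the enumerated
interpretation `I^e`. -/
structure EVal (q : CQ) (I : BagInterp) where
  ν : Var → I.Δ
  hjunk : ∀ v, v ∉ q.vars → ν v = I.indMap 0
  heq : ∀ z t, QAtom.eqAt z t ∈ q.atoms → ν z = termVal I ν t
  ℓ : EAtom q → ℕ
  hone : ∀ e : EAtom q, 1 ≤ ℓ e
  hconcept : ∀ (e : EAtom q) (A : AtomicConcept) (t : Term),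
    e.1.1 = QAtom.conceptAt A t → (ℓ e : ℕ∞) ≤ I.cI A (termVal I ν t)
  hrole : ∀ (e : EAtom q) (P : AtomicRole) (t₁ t₂ : Term),
    e.1.1 = QAtom.roleAt P t₁ t₂ → (ℓ e : ℕ∞) ≤ I.rI P (termVal I ν t₁) (termVal I ν t₂)
  heqm : ∀ (e : EAtom q) (z : Var) (t : Term), e.1.1 = QAtom.eqAt z t → ℓ e = 1

/-- The tuple of domain elements to which an e-atom is sent by an e-valuation. -/
def EVal.imgTerms {q : CQ} {I : BagInterp} (ev : EVal q I) (e : EAtom q) : List I.Δ :=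
  (QAtom.terms e.1.1).map (termVal I ev.ν)

/-- The enumerated image of an e-atom under an e-valuation. -/
def EVal.img {q : CQ} {I : BagInterp} (ev : EVal q I) (e : EAtom q) : List I.Δ × ℕ :=
  (ev.imgTerms e, ev.ℓ e)

/- ## Auxiliary concrete queries -/

/-- The CQ `ζ_C(x)`: `A(x)`, `∃y.P(x,y)` or `∃y.P(y,x)`. -/
def zetaCQ : DLConcept → CQ
  | DLConcept.atomic A => ⟨[0], [], [QAtom.conceptAt A (Term.var 0)]⟩
  | DLConcept.ex (Role.atomic P) => ⟨[0], [1], [QAtom.roleAt P (Term.var 0) (Term.var 1)]⟩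
  | DLConcept.ex (Role.inv P) => ⟨[0], [1], [QAtom.roleAt P (Term.var 1) (Term.var 0)]⟩

/-- The CQ `q(x) = R(x,x)`. -/
def selfCQ (P : AtomicRole) : CQ := ⟨[0], [], [QAtom.roleAt P (Term.var 0) (Term.var 0)]⟩

/-- Vertex = atomic concept 0; Edge = atomic role 0, hasColour = atomic role 1,
Assign = atomic role 2, Reachable = atomic role 3.
TBox `{Vertex ⊑ ∃hasColour, hasColour ⊑ Assign}` (a DL-Lite_R TBox with a role
inclusion). -/
def tbox14 : TBox :=
  {TBoxAxiom.cIncl (DLConcept.atomic 0) (DLConcept.ex (Role.atomic 1)),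
   TBoxAxiom.rIncl (Role.atomic 1) (Role.atomic 2)}

/-- The rooted CQ `q(w) = ∃x,y,z,k,l. Edge(x,y) ∧ hasColour(x,z) ∧
hasColour(y,z) ∧ Assign(x,w) ∧ Assign(y,w) ∧ Reachable(x,k) ∧ Assign(k,l)`
(w = variable 0 is the answer variable; x,y,z,k,l = variables 1,…,5). -/
def q14 : CQ :=
  ⟨[0], [1, 2, 3, 4, 5],
    [QAtom.roleAt 0 (Term.var 1) (Term.var 2),
     QAtom.roleAt 1 (Term.var 1) (Term.var 3),
     QAtom.roleAt 1 (Term.var 2) (Term.var 3),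
     QAtom.roleAt 2 (Term.var 1) (Term.var 0),
     QAtom.roleAt 2 (Term.var 2) (Term.var 0),
     QAtom.roleAt 3 (Term.var 1) (Term.var 4),
     QAtom.roleAt 2 (Term.var 4) (Term.var 5)]⟩

/-- The bag ABox `A_G` for a graph `G = (V,E)` (vertices `u` encoded as
individuals `u+4`, the fresh vertex `a` as `0` and the fresh colours `r,g,b` as
`1,2,3`), all assertions with multiplicity 1: `Vertex(u)` for `u ∈ V`;
`Edge(u,v)` for `(u,v) ∈ E`; `Assign(u,r)`, `Assign(u,g)`, `Assign(u,b)` for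
`u ∈ V`; `Vertex(a)`, `Edge(a,a)`, `hasColour(a,r)`, `Assign(a,r)`;
`Reachable(a,a)`, `Reachable(a,u)`, `Reachable(u,a)` for `u ∈ V`; and
`Reachable(u,v)` for all distinct `u,v ∈ V`. -/
def abox14 (V : Finset ℕ) (E : Finset (ℕ × ℕ)) : BagABox :=
  V.val.map (fun u => Assertion.conceptA 0 (u + 4))
    + E.val.map (fun p => Assertion.roleA 0 (p.1 + 4) (p.2 + 4))
    + V.val.map (fun u => Assertion.roleA 2 (u + 4) 1)
    + V.val.map (fun u => Assertion.roleA 2 (u + 4) 2)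
    + V.val.map (fun u => Assertion.roleA 2 (u + 4) 3)
    + {Assertion.conceptA 0 0, Assertion.roleA 0 0 0, Assertion.roleA 1 0 1,
       Assertion.roleA 2 0 1, Assertion.roleA 3 0 0}
    + V.val.map (fun u => Assertion.roleA 3 0 (u + 4))
    + V.val.map (fun u => Assertion.roleA 3 (u + 4) 0)
    + ((V ×ˢ V).filter (fun p => p.1 ≠ p.2)).val.map
        (fun p => Assertion.roleA 3 (p.1 + 4) (p.2 + 4))

/- ## Auxiliary lemmas for Statement 14 -/

lemma le_bagSum {α : Type*} (f : α → ℕ∞) (a : α) : f a ≤ bagSum f := by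
  refine le_trans ?_ (le_iSup _ ({a} : Finset α)); simp

lemma sum_le_bagSum {α : Type*} (f : α → ℕ∞) (s : Finset α) :
    ∑ x ∈ s, f x ≤ bagSum f := le_iSup (fun t : Finset α => ∑ x ∈ t, f x) s

lemma bagSum_le {α : Type*} {f : α → ℕ∞} {C : ℕ∞}
    (h : ∀ s : Finset α, ∑ x ∈ s, f x ≤ C) : bagSum f ≤ C := iSup_le h

lemma one_le_bagSum_exists {α : Type*} {f : α → ℕ∞} (h : 1 ≤ bagSum f) :
    ∃ a, 1 ≤ f a := by
  by_contra hc
  push_neg at hc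
  have hz : ∀ a, f a = 0 := by
    intro a
    have := hc a
    exact by simpa [ENat.lt_one_iff_eq_zero] using this
  have : bagSum f = 0 := by
    refine le_antisymm (bagSum_le fun s => ?_) zero_le
    simp [hz]
  simp [this] at h

lemma one_le_assertMult {I : BagInterp} {K : Ontology} (hI : I.IsModel K)
    {s : Assertion} (h : s ∈ K.abox) : 1 ≤ I.assertMult s := by
  refine le_trans ?_ (hI.2 s)
  have : 1 ≤ K.abox.count s := Multiset.one_le_count_iff_mem.mpr h
  simpa [BagABox.mult] using (Nat.one_le_cast (α := ℕ∞)).mpr this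

lemma one_le_mul_enat {a b : ℕ∞} (ha : 1 ≤ a) (hb : 1 ≤ b) : 1 ≤ a * b := by
  calc (1 : ℕ∞) = 1 * 1 := by ring
  _ ≤ a * b := mul_le_mul' ha hb

lemma mul_le_one_enat {a b : ℕ∞} (ha : a ≤ 1) (hb : b ≤ 1) : a * b ≤ 1 := by
  calc a * b ≤ 1 * 1 := mul_le_mul' ha hb
  _ = 1 := by ring

lemma injCA : Function.Injective (fun u : ℕ => Assertion.conceptA 0 (u + 4)) := by
  intro a b h; simp only [Assertion.conceptA.injEq, true_and] at h
  have h' : a + 4 = b + 4 := h; omega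

lemma injRV (P c : ℕ) : Function.Injective (fun u : ℕ => Assertion.roleA P (u + 4) c) := by
  intro a b h; simp only [Assertion.roleA.injEq, true_and, and_true, and_self] at h
  have h' : a + 4 = b + 4 := h; omega

lemma injRV2 (P c : ℕ) : Function.Injective (fun u : ℕ => Assertion.roleA P c (u + 4)) := by
  intro a b h; simp only [Assertion.roleA.injEq, true_and] at h
  have h' : a + 4 = b + 4 := h; omega

lemma injRE (P : ℕ) :
    Function.Injective (fun p : ℕ × ℕ => Assertion.roleA P (p.1 + 4) (p.2 + 4)) := by
  intro a b h; simp only [Assertion.roleA.injEq, true_and] at h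
  have h1 : a.1 + 4 = b.1 + 4 := h.1
  have h2 : a.2 + 4 = b.2 + 4 := h.2
  exact Prod.ext (by omega) (by omega)

lemma add4_ne (x c : ℕ) (h : c < 4) : (x + 4 = c) ↔ False := iff_false_intro (by omega)

lemma ne_add4 (x c : ℕ) (h : c < 4) : (c = x + 4) ↔ False := iff_false_intro (by omega)

lemma abox14_nodup (V : Finset ℕ) (E : Finset (ℕ × ℕ)) : (abox14 V E).Nodup := by
  rw [abox14]
  simp only [Multiset.nodup_add, Multiset.disjoint_add_left]
  repeat' apply And.intro
  all_goals
    first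
    | exact Multiset.Nodup.map injCA (Finset.nodup _)
    | exact Multiset.Nodup.map (injRV _ _) (Finset.nodup _)
    | exact Multiset.Nodup.map (injRV2 _ _) (Finset.nodup _)
    | exact Multiset.Nodup.map (injRE _) (Finset.nodup _)
    | decide
    | (rw [Multiset.disjoint_left]
       rintro a ha hb
       simp only [Multiset.mem_map, Finset.mem_val, Multiset.insert_eq_cons,
         Multiset.mem_cons, Multiset.mem_singleton] at ha hb
       first
       | (rcases ha with (rfl | rfl | rfl | rfl | rfl) <;> simp_all [add4_ne, ne_add4])
       | (rcases ha with ⟨x, hx, rfl⟩ <;> simp_all [add4_ne, ne_add4]))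

/-- The witness bag model built from a 3-colouring `γ` of `G`. -/
def modelI (V : Finset ℕ) (E : Finset (ℕ × ℕ)) (γ : ℕ → Fin 3) : BagInterp where
  Δ := ℕ
  dne := ⟨0⟩
  indMap := id
  indInj := fun _ _ h => h
  cI := fun A u => if A = 0 ∧ (u = 0 ∨ ∃ w ∈ V, u = w + 4) then 1 else 0
  rI := fun P u v =>
    if P = 0 ∧ ((u, v) = (0, 0) ∨ ∃ p ∈ E, u = p.1 + 4 ∧ v = p.2 + 4) then 1
    else if P = 1 ∧ ((u, v) = (0, 1) ∨ ∃ w ∈ V, u = w + 4 ∧ v = (γ w).val + 1) then 1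
    else if P = 2 ∧ ((u, v) = (0, 1) ∨ ∃ w ∈ V, u = w + 4 ∧ (v = 1 ∨ v = 2 ∨ v = 3)) then 1
    else if P = 3 ∧ (u = 0 ∨ ∃ w ∈ V, u = w + 4) ∧ (v = 0 ∨ ∃ w ∈ V, v = w + 4) then 1
    else 0

lemma modelI_isModel (V : Finset ℕ) (E : Finset (ℕ × ℕ)) (γ : ℕ → Fin 3) :
    (modelI V E γ).IsModel ⟨tbox14, abox14 V E⟩ := by
  constructor
  · intro ax hax
    simp only [tbox14, Finset.mem_insert, Finset.mem_singleton] at hax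
    rcases hax with rfl | rfl
    · intro (u : ℕ)
      simp only [BagInterp.conceptMult, BagInterp.roleMult]
      by_cases h : u = (0 : ℕ) ∨ ∃ w ∈ V, u = w + (4 : ℕ)
      · rcases h with rfl | ⟨w, hw, rfl⟩
        · refine le_trans ?_ (le_bagSum _ (1 : ℕ))
          simp [modelI]
        · refine le_trans ?_ (le_bagSum _ ((γ w).val + 1 : ℕ))
          have h1 : ∃ w1 ∈ V, w = w1 ∧ ((γ w).val : ℕ) = (γ w1).val := ⟨w, hw, rfl, rfl⟩
          simp [modelI, hw, h1]
      · have h0 : ¬ (u = (0 : ℕ) ∨ ∃ w ∈ V, u = w + (4 : ℕ)) := h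
        simp [modelI, h0]
    · intro (u : ℕ) (v : ℕ)
      simp only [BagInterp.roleMult]
      by_cases hA : (u = (0:ℕ) ∧ v = (1:ℕ)) ∨ ∃ w ∈ V, u = w + (4:ℕ) ∧ v = (γ w).val + 1
      · have hB : (u = (0:ℕ) ∧ v = (1:ℕ)) ∨ ∃ w ∈ V, u = w + (4:ℕ) ∧ (v = (1:ℕ) ∨ v = (2:ℕ) ∨ v = (3:ℕ)) := by
          rcases hA with h | ⟨w, hw, rfl, rfl⟩
          · exact Or.inl h
          · refine Or.inr ⟨w, hw, rfl, ?_⟩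
            have h3 : (γ w).val = 0 ∨ (γ w).val = 1 ∨ (γ w).val = 2 := by
              have := (γ w).isLt; omega
            rcases h3 with h3 | h3 | h3
            · exact Or.inl (show ((γ w).val + 1 : ℕ) = 1 by omega)
            · exact Or.inr (Or.inl (show ((γ w).val + 1 : ℕ) = 2 by omega))
            · exact Or.inr (Or.inr (show ((γ w).val + 1 : ℕ) = 3 by omega))
        simp [modelI, hA, hB]
      · simp [modelI, hA]
  · intro s
    have hc : (abox14 V E).count s ≤ 1 :=
      Multiset.nodup_iff_count_le_one.1 (abox14_nodup V E) s
    by_cases hs : s ∈ abox14 V E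
    · have h1 : BagABox.mult (abox14 V E) s ≤ 1 := by
        rw [BagABox.mult]
        exact_mod_cast Nat.cast_le.mpr hc
      refine le_trans h1 ?_
      rw [abox14] at hs
      simp only [Multiset.mem_add, Multiset.mem_map, Finset.mem_val,
        Multiset.insert_eq_cons, Multiset.mem_cons, Multiset.mem_singleton] at hs
      clear h1 hc
      rcases hs with
        ⟨⟨⟨⟨⟨⟨⟨⟨u,hu,rfl⟩|⟨p,hp,rfl⟩⟩|⟨u,hu,rfl⟩⟩|⟨u,hu,rfl⟩⟩|⟨u,hu,rfl⟩⟩|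
          (rfl|rfl|rfl|rfl|rfl)⟩|⟨u,hu,rfl⟩⟩|⟨u,hu,rfl⟩⟩|⟨p,hp,rfl⟩ <;>
      simp_all [BagInterp.assertMult, modelI, Multiset.mem_filter, Finset.mem_val,
        Finset.mem_product]
    · have : (abox14 V E).count s = 0 := Multiset.count_eq_zero.2 hs
      simp [BagABox.mult, this]

def stdVal (k l : ℕ) : Var → ℕ := fun v =>
  if v = 0 then 1 else if v = 3 then 1 else if v = 4 then k else if v = 5 then l else 0

def Dset (V : Finset ℕ) : Finset (ℕ × ℕ) :=
  insert (0, 1) ((V.image (· + 4)) ×ˢ ({1, 2, 3} : Finset ℕ))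

lemma Dset_card (V : Finset ℕ) : (Dset V).card = 3 * V.card + 1 := by
  rw [Dset, Finset.card_insert_of_notMem]
  · rw [Finset.card_product, Finset.card_image_of_injective _ (fun a b h => by omega)]
    have : ({1, 2, 3} : Finset ℕ).card = 3 := by decide
    rw [this]; ring
  · simp

lemma q14_not_var' (v : Var) (h0 : v ≠ 0) (h1 : v ≠ 1) (h2 : v ≠ 2) (h3 : v ≠ 3)
    (h4 : v ≠ 4) (h5 : v ≠ 5) : v ∉ q14.vars := by
  intro h
  have h' : v = 0 ∨ v = 1 ∨ v = 2 ∨ v = 3 ∨ v = 4 ∨ v = 5 := by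
    simpa [q14, CQ.vars] using h
  rcases h' with h' | h' | h' | h' | h' | h'
  · exact h0 h'
  · exact h1 h'
  · exact h2 h'
  · exact h3 h'
  · exact h4 h'
  · exact h5 h'

lemma q14_not_var (v : ℕ) (hv : 6 ≤ v) : v ∉ q14.vars := by
  intro h
  have h' : v = 0 ∨ v = 1 ∨ v = 2 ∨ v = 3 ∨ v = 4 ∨ v = 5 := by
    simpa [q14, CQ.vars] using h
  omega

lemma sum_le_card {α β : Type*} [DecidableEq β] (s : Finset α) (D : Finset β)
    (e : α → β) (g : α → ℕ∞)
    (hle : ∀ x ∈ s, g x ≤ 1)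
    (hsupp : ∀ x ∈ s, g x ≠ 0 → e x ∈ D)
    (hinj : ∀ x ∈ s, ∀ y ∈ s, g x ≠ 0 → g y ≠ 0 → e x = e y → x = y) :
    ∑ x ∈ s, g x ≤ (D.card : ℕ∞) := by
  classical
  calc ∑ x ∈ s, g x
      = ∑ x ∈ s.filter (fun x => g x ≠ 0), g x := (Finset.sum_filter_ne_zero s).symm
    _ ≤ ∑ _x ∈ s.filter (fun x => g x ≠ 0), (1 : ℕ∞) := by
        refine Finset.sum_le_sum fun x hx => ?_
        exact hle x (Finset.mem_filter.mp hx).1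
    _ = (((s.filter (fun x => g x ≠ 0)).card : ℕ) : ℕ∞) := by
        rw [Finset.sum_const, nsmul_eq_mul, mul_one]
    _ ≤ (D.card : ℕ∞) := by
        refine Nat.cast_le.mpr (Finset.card_le_card_of_injOn e ?_ ?_)
        · intro x hx
          exact hsupp x (Finset.mem_filter.mp hx).1 (Finset.mem_filter.mp hx).2
        · intro x hx y hy hxy
          exact hinj x (Finset.mem_filter.mp hx).1 y (Finset.mem_filter.mp hy).1
            (Finset.mem_filter.mp hx).2 (Finset.mem_filter.mp hy).2 hxy

lemma upper_bound (V : Finset ℕ) (E : Finset (ℕ × ℕ)) (γ : ℕ → Fin 3)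
    (hγ : ∀ p ∈ E, γ p.1 ≠ γ p.2) :
    q14.bagAnswer (modelI V E γ) [1] ≤ ((3 * V.card + 1 : ℕ) : ℕ∞) := by
  have fact_le : ∀ (P : ℕ) (a b : ℕ), (modelI V E γ).rI P a b ≤ 1 := by
    intro P a b; simp only [modelI]; split_ifs <;> norm_num
  have redge : ∀ a b : ℕ, (modelI V E γ).rI 0 a b ≠ 0 →
      ((a = 0 ∧ b = 0) ∨ ∃ p ∈ E, a = p.1 + 4 ∧ b = p.2 + 4) := by
    intro a b h
    by_contra hc
    apply h
    have hc' : ¬ ((a, b) = ((0:ℕ), (0:ℕ)) ∨ ∃ p ∈ E, a = p.1 + 4 ∧ b = p.2 + 4) := by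
      intro hp
      apply hc
      rcases hp with hp | hp
      · exact Or.inl ⟨congrArg Prod.fst hp, congrArg Prod.snd hp⟩
      · exact Or.inr hp
    simp only [modelI]
    rw [if_neg (fun hh => hc' hh.2),
        if_neg (fun hh => absurd hh.1 (by norm_num)),
        if_neg (fun hh => absurd hh.1 (by norm_num)),
        if_neg (fun hh => absurd hh.1 (by norm_num))]
  have rhc : ∀ a b : ℕ, (modelI V E γ).rI 1 a b ≠ 0 →
      ((a = 0 ∧ b = 1) ∨ ∃ w ∈ V, a = w + 4 ∧ b = (γ w).val + 1) := by
    intro a b h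
    by_contra hc
    apply h
    have hc' : ¬ ((a, b) = ((0:ℕ), (1:ℕ)) ∨ ∃ w ∈ V, a = w + 4 ∧ b = (γ w).val + 1) := by
      intro hp
      apply hc
      rcases hp with hp | hp
      · exact Or.inl ⟨congrArg Prod.fst hp, congrArg Prod.snd hp⟩
      · exact Or.inr hp
    simp only [modelI]
    rw [if_neg (fun hh => absurd hh.1 (by norm_num)),
        if_neg (fun hh => hc' hh.2),
        if_neg (fun hh => absurd hh.1 (by norm_num)),
        if_neg (fun hh => absurd hh.1 (by norm_num))]
  have ras : ∀ a b : ℕ, (modelI V E γ).rI 2 a b ≠ 0 →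
      ((a = 0 ∧ b = 1) ∨ ∃ w ∈ V, a = w + 4 ∧ (b = 1 ∨ b = 2 ∨ b = 3)) := by
    intro a b h
    by_contra hc
    apply h
    have hc' : ¬ ((a, b) = ((0:ℕ), (1:ℕ)) ∨ ∃ w ∈ V, a = w + 4 ∧ (b = 1 ∨ b = 2 ∨ b = 3)) := by
      intro hp
      apply hc
      rcases hp with hp | hp
      · exact Or.inl ⟨congrArg Prod.fst hp, congrArg Prod.snd hp⟩
      · exact Or.inr hp
    simp only [modelI]
    rw [if_neg (fun hh => absurd hh.1 (by norm_num)),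
        if_neg (fun hh => absurd hh.1 (by norm_num)),
        if_neg (fun hh => hc' hh.2),
        if_neg (fun hh => absurd hh.1 (by norm_num))]
  rw [CQ.bagAnswer]
  refine bagSum_le fun s => ?_
  have main : ∀ f : Var → (modelI V E γ).Δ,
      (∀ v ∉ q14.vars, f v = (modelI V E γ).indMap 0) →
      (List.map f q14.answerVars = List.map (modelI V E γ).indMap [1]) →
      (List.map (QAtom.mult (modelI V E γ) f) q14.atoms).prod ≠ 0 →
      (f = stdVal (f 4) (f 5) ∧ (f 4, f 5) ∈ Dset V) := by
    intro f hjunk hans hne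
    simp only [q14, List.map_cons, List.map_nil, List.prod_cons, List.prod_nil,
      QAtom.mult, termVal, mul_one, ne_eq, mul_eq_zero, not_or] at hne
    obtain ⟨h1, h2, h3, h4, h5, h6, h7⟩ := hne
    have hf0 : f 0 = (1:ℕ) := (List.cons.inj hans).1
    have hf123 : f 1 = (0:ℕ) ∧ f 2 = (0:ℕ) ∧ f 3 = (1:ℕ) := by
      rcases redge _ _ h1 with ⟨e1, e2⟩ | ⟨p, hp, e1, e2⟩
      · refine ⟨e1, e2, ?_⟩
        rcases rhc _ _ h2 with ⟨_, c1⟩ | ⟨w, hw, c1, c2⟩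
        · exact c1
        · exfalso; rw [e1] at c1; have h0 : (0 : ℕ) = w + 4 := c1; omega
      · exfalso
        rcases rhc _ _ h2 with ⟨c1, _⟩ | ⟨w, hw, c1, c2⟩
        · rw [e1] at c1; have h0 : p.1 + 4 = (0 : ℕ) := c1; omega
        · rcases rhc _ _ h3 with ⟨d1, _⟩ | ⟨w', hw', d1, d2⟩
          · rw [e2] at d1; have h0 : p.2 + 4 = (0 : ℕ) := d1; omega
          · have hww : w = p.1 := by
              rw [e1] at c1; have h0 : p.1 + 4 = w + 4 := c1; omega
            have hww' : w' = p.2 := by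
              rw [e2] at d1; have h0 : p.2 + 4 = w' + 4 := d1; omega
            have heq : (γ w).val + 1 = (γ w').val + 1 := by
              have hc2 : f 3 = (γ w).val + 1 := c2
              have hd2 : f 3 = (γ w').val + 1 := d2
              rw [hc2] at hd2; exact hd2
            apply hγ p hp
            rw [← hww, ← hww']
            exact Fin.ext (by omega)
    obtain ⟨hf1, hf2, hf3⟩ := hf123
    have hpair : (f 4, f 5) ∈ Dset V := by
      show (@Prod.mk ℕ ℕ (f 4) (f 5)) ∈ Dset V
      rcases ras _ _ h7 with ⟨a1, a2⟩ | ⟨w, hw, a1, a2⟩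
      · simp only [Dset, Finset.mem_insert]
        left
        rw [Prod.ext_iff]
        exact ⟨a1, a2⟩
      · simp only [Dset, Finset.mem_insert, Finset.mem_product, Finset.mem_image,
          Finset.mem_singleton]
        right
        exact ⟨Finset.mem_image.mpr ⟨w, hw, a1.symm⟩, Finset.mem_insert.mpr (a2.imp id (fun h => Finset.mem_insert.mpr
          (h.imp id Finset.mem_singleton.mpr)))⟩
    refine ⟨?_, hpair⟩
    funext v
    simp only [stdVal]
    by_cases hv0 : v = 0
    · rw [if_pos hv0, hv0, hf0]
    by_cases hv3 : v = 3
    · rw [if_neg hv0, if_pos hv3, hv3, hf3]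
    by_cases hv4 : v = 4
    · subst hv4; rfl
    by_cases hv5 : v = 5
    · subst hv5; rfl
    rw [if_neg hv0, if_neg hv3]
    refine Eq.trans ?_ (if_neg hv4).symm
    refine Eq.trans ?_ (if_neg hv5).symm
    · by_cases hv1 : v = 1
      · rw [hv1, hf1]
      · by_cases hv2 : v = 2
        · rw [hv2, hf2]
        · have hj := hjunk v (q14_not_var' v hv0 hv1 hv2 hv3 hv4 hv5)
          simpa [modelI] using hj
  refine le_trans (sum_le_card s (Dset V) (fun x => (x.1 4, x.1 5))
      (fun x => (q14.atoms.map (QAtom.mult (modelI V E γ) x.1)).prod) ?_ ?_ ?_) ?_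
  · rintro ⟨f, hjunk, hans⟩ _
    simp only [q14, List.map_cons, List.map_nil, List.prod_cons, List.prod_nil,
      QAtom.mult, termVal, mul_one]
    refine mul_le_one_enat (fact_le _ _ _) (mul_le_one_enat (fact_le _ _ _)
      (mul_le_one_enat (fact_le _ _ _) (mul_le_one_enat (fact_le _ _ _)
      (mul_le_one_enat (fact_le _ _ _) (mul_le_one_enat (fact_le _ _ _)
      (fact_le _ _ _))))))
  · rintro ⟨f, hjunk, hans⟩ _ hne
    exact (main f hjunk hans hne).2
  · rintro ⟨f, hjf, haf⟩ hx ⟨g, hjg, hag⟩ hy hnf hng hxy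
    have hf := (main f hjf haf hnf).1
    have hg := (main g hjg hag hng).1
    refine Subtype.ext ?_
    simp only []
    rw [hf, hg]
    have h4 : f 4 = g 4 := congrArg Prod.fst hxy
    have h5 : f 5 = g 5 := congrArg Prod.snd hxy
    rw [h4, h5]
  · rw [Dset_card]

lemma q14_mem_vars : (0 : Var) ∈ q14.vars ∧ (1 : Var) ∈ q14.vars ∧ (2 : Var) ∈ q14.vars ∧
    (3 : Var) ∈ q14.vars ∧ (4 : Var) ∈ q14.vars ∧ (5 : Var) ∈ q14.vars := by
  refine ⟨?_, ?_, ?_, ?_, ?_, ?_⟩ <;> simp [q14, CQ.vars]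

def bfun (I : BagInterp) (k l : ℕ) : Var → I.Δ := fun v =>
  if v = 0 then I.indMap 1 else if v = 3 then I.indMap 1
  else if v = 4 then I.indMap k else if v = 5 then I.indMap l else I.indMap 0

lemma lower_bound (V : Finset ℕ) (E : Finset (ℕ × ℕ))
    (hVE : ∀ p ∈ E, p.1 ∈ V ∧ p.2 ∈ V)
    (hnc : ¬ ∃ γ : ℕ → Fin 3, ∀ p ∈ E, γ p.1 ≠ γ p.2)
    (I : BagInterp) (hI : I.IsModel ⟨tbox14, abox14 V E⟩) :
    ((3 * V.card + 2 : ℕ) : ℕ∞) ≤ q14.bagAnswer I [1] := by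
  -- ABox membership facts
  have mVert : ∀ u ∈ V, Assertion.conceptA 0 (u + 4) ∈ abox14 V E := by
    intro u hu; simp [abox14, hu]
  have mEdge00 : Assertion.roleA 0 0 0 ∈ abox14 V E := by simp [abox14]
  have mHC : Assertion.roleA 1 0 1 ∈ abox14 V E := by simp [abox14]
  have mAs01 : Assertion.roleA 2 0 1 ∈ abox14 V E := by simp [abox14]
  have mRe00 : Assertion.roleA 3 0 0 ∈ abox14 V E := by simp [abox14]
  have mReA : ∀ u ∈ V, Assertion.roleA 3 0 (u + 4) ∈ abox14 V E := by
    intro u hu; simp [abox14, hu]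
  have mReU : ∀ u ∈ V, Assertion.roleA 3 (u + 4) 0 ∈ abox14 V E := by
    intro u hu; simp [abox14, hu]
  have mAsc : ∀ u ∈ V, ∀ c : ℕ, c = 1 ∨ c = 2 ∨ c = 3 →
      Assertion.roleA 2 (u + 4) c ∈ abox14 V E := by
    intro u hu c hc
    rcases hc with rfl | rfl | rfl <;> simp [abox14, hu]
  have mEdge : ∀ p ∈ E, Assertion.roleA 0 (p.1 + 4) (p.2 + 4) ∈ abox14 V E := by
    intro p hp; simp only [abox14, Multiset.mem_add]
    exact Or.inl (Or.inl (Or.inl (Or.inl (Or.inl (Or.inl (Or.inl (Or.inr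
      (Multiset.mem_map.mpr ⟨p, hp, rfl⟩))))))))
  -- basic consequences of the model conditions
  have hr : ∀ (P : AtomicRole) (a b : Ind), Assertion.roleA P a b ∈ abox14 V E →
      1 ≤ I.rI P (I.indMap a) (I.indMap b) := fun P a b h => one_le_assertMult hI h
  have hax1 := hI.1 (TBoxAxiom.cIncl (DLConcept.atomic 0) (DLConcept.ex (Role.atomic 1)))
    (by simp [tbox14])
  have hax2 := hI.1 (TBoxAxiom.rIncl (Role.atomic 1) (Role.atomic 2)) (by simp [tbox14])
  have hax2' : ∀ u v : I.Δ, I.rI 1 u v ≤ I.rI 2 u v := hax2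
  have exC : ∀ u ∈ V, ∃ c : I.Δ, 1 ≤ I.rI 1 (I.indMap (u + 4)) c := by
    intro u hu
    have h1 : (1 : ℕ∞) ≤ I.cI 0 (I.indMap (u + 4)) := one_le_assertMult hI (mVert u hu)
    have h2 : (1 : ℕ∞) ≤ bagSum (fun v => I.rI 1 (I.indMap (u + 4)) v) :=
      le_trans h1 (hax1 (I.indMap (u + 4)))
    exact one_le_bagSum_exists h2
  obtain ⟨hm0, hm1, hm2, hm3, hm4, hm5⟩ := q14_mem_vars
  -- the base family of valuations
  set T := {f : Var → I.Δ // (∀ v ∉ q14.vars, f v = I.indMap 0) ∧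
      List.map f q14.answerVars = List.map I.indMap [1]} with hT
  set g : T → ℕ∞ := fun x => (q14.atoms.map (QAtom.mult I x.1)).prod with hg
  have bprop : ∀ p : ℕ × ℕ, (∀ v ∉ q14.vars, bfun I p.1 p.2 v = I.indMap 0) ∧
      List.map (bfun I p.1 p.2) q14.answerVars = List.map I.indMap [1] := by
    intro p
    constructor
    · intro v hv
      have h0 : v ≠ 0 := fun h => hv (h ▸ hm0)
      have h3 : v ≠ 3 := fun h => hv (h ▸ hm3)
      have h4 : v ≠ 4 := fun h => hv (h ▸ hm4)
      have h5 : v ≠ 5 := fun h => hv (h ▸ hm5)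
      simp [bfun, h0, h3, h4, h5]
    · simp [q14, bfun]
  have base_apply : ∀ k l : ℕ,
      bfun I k l 1 = I.indMap 0 ∧ bfun I k l 2 = I.indMap 0 ∧
      bfun I k l 0 = I.indMap 1 ∧ bfun I k l 3 = I.indMap 1 ∧
      bfun I k l 4 = I.indMap k ∧ bfun I k l 5 = I.indMap l := by
    intro k l
    refine ⟨?_, ?_, ?_, ?_, ?_, ?_⟩ <;> simp [bfun]
  have hbase : ∀ p ∈ Dset V, (1 : ℕ∞) ≤ g ⟨bfun I p.1 p.2, bprop p⟩ := by
    intro p hp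
    obtain ⟨hb1, hb2, hb0, hb3, hb4, hb5⟩ := base_apply p.1 p.2
    simp only [hg]
    simp only [q14, List.map_cons, List.map_nil, List.prod_cons, List.prod_nil,
      QAtom.mult, termVal, mul_one, hb0, hb1, hb2, hb3, hb4, hb5]
    have hF6 : 1 ≤ I.rI 3 (I.indMap 0) (I.indMap p.1) := by
      rcases Finset.mem_insert.mp hp with h | h
      · rw [show p.1 = 0 from congrArg Prod.fst h]
        exact hr 3 0 0 mRe00
      · obtain ⟨h1, _⟩ := Finset.mem_product.mp h
        obtain ⟨w, hw, hw4⟩ := Finset.mem_image.mp h1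
        rw [← hw4]
        exact hr 3 0 (w + 4) (mReA w hw)
    have hF7 : 1 ≤ I.rI 2 (I.indMap p.1) (I.indMap p.2) := by
      rcases Finset.mem_insert.mp hp with h | h
      · rw [show p.1 = 0 from congrArg Prod.fst h, show p.2 = 1 from congrArg Prod.snd h]
        exact hr 2 0 1 mAs01
      · obtain ⟨h1, h2⟩ := Finset.mem_product.mp h
        obtain ⟨w, hw, hw4⟩ := Finset.mem_image.mp h1
        rw [← hw4]
        refine hr 2 (w + 4) p.2 (mAsc w hw p.2 ?_)
        simpa using h2
    exact one_le_mul_enat (hr 0 0 0 mEdge00) (one_le_mul_enat (hr 1 0 1 mHC)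
      (one_le_mul_enat (hr 1 0 1 mHC) (one_le_mul_enat (hr 2 0 1 mAs01)
      (one_le_mul_enat (hr 2 0 1 mAs01) (one_le_mul_enat hF6 hF7)))))
  have hbaseInj : ∀ p ∈ Dset V, ∀ q ∈ Dset V,
      (⟨bfun I p.1 p.2, bprop p⟩ : T) = ⟨bfun I q.1 q.2, bprop q⟩ → p = q := by
    intro p _ q _ h
    have h4 : bfun I p.1 p.2 4 = bfun I q.1 q.2 4 := congrArg (fun z : T => z.1 4) h
    have h5 : bfun I p.1 p.2 5 = bfun I q.1 q.2 5 := congrArg (fun z : T => z.1 5) h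
    rw [(base_apply p.1 p.2).2.2.2.2.1, (base_apply q.1 q.2).2.2.2.2.1] at h4
    rw [(base_apply p.1 p.2).2.2.2.2.2, (base_apply q.1 q.2).2.2.2.2.2] at h5
    exact Prod.ext (I.indInj h4) (I.indInj h5)
  have hS0 : ((3 * V.card + 1 : ℕ) : ℕ∞) ≤
      ∑ x ∈ (Dset V).image (fun p => (⟨bfun I p.1 p.2, bprop p⟩ : T)), g x := by
    rw [Finset.sum_image hbaseInj]
    calc ((3 * V.card + 1 : ℕ) : ℕ∞) = ((Dset V).card : ℕ∞) := by rw [Dset_card]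
      _ = ∑ _p ∈ Dset V, (1 : ℕ∞) := by rw [Finset.sum_const, nsmul_eq_mul, mul_one]
      _ ≤ ∑ p ∈ Dset V, g ⟨bfun I p.1 p.2, bprop p⟩ := Finset.sum_le_sum hbase
  -- an extra valuation, in either case
  have extra : ∃ x : T, (1 : ℕ∞) ≤ g x ∧ x ∉ (Dset V).image (fun p => (⟨bfun I p.1 p.2, bprop p⟩ : T)) := by
    by_cases hcol : ∀ u ∈ V, ∀ c : I.Δ, 1 ≤ I.rI 1 (I.indMap (u + 4)) c →
        (c = I.indMap 1 ∨ c = I.indMap 2 ∨ c = I.indMap 3)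
    · -- every vertex coloured within {r,g,b}: extract a colouring, find monochromatic edge
      have key : ∀ u ∈ V, ∃ j : Fin 3, 1 ≤ I.rI 1 (I.indMap (u + 4)) (I.indMap (j.val + 1)) := by
        intro u hu
        obtain ⟨c, hc⟩ := exC u hu
        rcases hcol u hu c hc with rfl | rfl | rfl
        · exact ⟨0, hc⟩
        · exact ⟨1, hc⟩
        · exact ⟨2, hc⟩
      choose jf hjf using fun u (hu : u ∈ V) => key u hu
      set γ : ℕ → Fin 3 := fun u => if h : u ∈ V then jf u h else 0 with hγ
      obtain ⟨p, hp, hpe⟩ : ∃ p ∈ E, γ p.1 = γ p.2 := by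
        by_contra h
        push_neg at h
        exact hnc ⟨γ, h⟩
      have h1V := (hVE p hp).1
      have h2V := (hVE p hp).2
      have hj1 : 1 ≤ I.rI 1 (I.indMap (p.1 + 4)) (I.indMap ((γ p.1).val + 1)) := by
        have : γ p.1 = jf p.1 h1V := by rw [hγ]; exact dif_pos h1V
        rw [this]
        exact hjf p.1 h1V
      have hj2 : 1 ≤ I.rI 1 (I.indMap (p.2 + 4)) (I.indMap ((γ p.1).val + 1)) := by
        have : γ p.1 = jf p.2 h2V := by rw [hpe, hγ]; exact dif_pos h2V
        rw [this]
        exact hjf p.2 h2V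
      refine ⟨⟨fun v => if v = 0 then I.indMap 1 else if v = 1 then I.indMap (p.1 + 4)
        else if v = 2 then I.indMap (p.2 + 4) else if v = 3 then I.indMap ((γ p.1).val + 1)
        else if v = 5 then I.indMap 1 else I.indMap 0, ?_, ?_⟩, ?_, ?_⟩
      · intro v hv
        have h0 : v ≠ 0 := fun h => hv (h ▸ hm0)
        have h1 : v ≠ 1 := fun h => hv (h ▸ hm1)
        have h2 : v ≠ 2 := fun h => hv (h ▸ hm2)
        have h3 : v ≠ 3 := fun h => hv (h ▸ hm3)
        have h5 : v ≠ 5 := fun h => hv (h ▸ hm5)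
        simp [h0, h1, h2, h3, h5]
      · simp [q14]
      · rw [hg]
        simp only [q14, List.map_cons, List.map_nil, List.prod_cons, List.prod_nil,
          QAtom.mult, termVal, mul_one]
        norm_num
        exact one_le_mul_enat (hr 0 (p.1 + 4) (p.2 + 4) (mEdge p hp))
          (one_le_mul_enat hj1 (one_le_mul_enat hj2
          (one_le_mul_enat (hr 2 (p.1 + 4) 1 (mAsc p.1 h1V 1 (Or.inl rfl)))
          (one_le_mul_enat (hr 2 (p.2 + 4) 1 (mAsc p.2 h2V 1 (Or.inl rfl)))
          (one_le_mul_enat (hr 3 (p.1 + 4) 0 (mReU p.1 h1V)) (hr 2 0 1 mAs01))))))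
      · intro hmem
        obtain ⟨q, _, hq⟩ := Finset.mem_image.mp hmem
        have h1' := congrArg (fun z : T => z.1 1) hq
        simp only [bfun] at h1'
        norm_num at h1'
        have h0 : (0 : ℕ) = p.1 + 4 := I.indInj h1'
        omega
    · -- some vertex has a colour outside {r,g,b}
      push_neg at hcol
      obtain ⟨u, hu, c, hc, hc1, hc2, hc3⟩ := hcol
      have hass : 1 ≤ I.rI 2 (I.indMap (u + 4)) c := le_trans hc (hax2' _ _)
      refine ⟨⟨fun v => if v = 0 then I.indMap 1 else if v = 3 then I.indMap 1
        else if v = 4 then I.indMap (u + 4) else if v = 5 then c else I.indMap 0, ?_, ?_⟩, ?_, ?_⟩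
      · intro v hv
        have h0 : v ≠ 0 := fun h => hv (h ▸ hm0)
        have h3 : v ≠ 3 := fun h => hv (h ▸ hm3)
        have h4 : v ≠ 4 := fun h => hv (h ▸ hm4)
        have h5 : v ≠ 5 := fun h => hv (h ▸ hm5)
        simp [h0, h3, h4, h5]
      · simp [q14]
      · rw [hg]
        simp only [q14, List.map_cons, List.map_nil, List.prod_cons, List.prod_nil,
          QAtom.mult, termVal, mul_one]
        norm_num
        exact one_le_mul_enat (hr 0 0 0 mEdge00) (one_le_mul_enat (hr 1 0 1 mHC)
          (one_le_mul_enat (hr 1 0 1 mHC) (one_le_mul_enat (hr 2 0 1 mAs01)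
          (one_le_mul_enat (hr 2 0 1 mAs01)
          (one_le_mul_enat (hr 3 0 (u + 4) (mReA u hu)) hass)))))
      · intro hmem
        obtain ⟨q, hqD, hq⟩ := Finset.mem_image.mp hmem
        have hcomp := congrArg (fun z : T => z.1 5) hq
        simp only [bfun] at hcomp
        norm_num at hcomp
        have hq2 : q.2 = 1 ∨ q.2 = 2 ∨ q.2 = 3 := by
          rcases Finset.mem_insert.mp hqD with h | h
          · exact Or.inl (congrArg Prod.snd h)
          · obtain ⟨_, h2⟩ := Finset.mem_product.mp h
            simpa using h2
        rcases hq2 with h | h | h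
        · exact hc1 (by rw [← hcomp, h])
        · exact hc2 (by rw [← hcomp, h])
        · exact hc3 (by rw [← hcomp, h])
  obtain ⟨x, hx1, hxmem⟩ := extra
  rw [CQ.bagAnswer]
  refine le_trans ?_ (sum_le_bagSum _ (insert x ((Dset V).image (fun p => (⟨bfun I p.1 p.2, bprop p⟩ : T)))))
  rw [Finset.sum_insert hxmem]
  have hcast : ((3 * V.card + 2 : ℕ) : ℕ∞) = 1 + ((3 * V.card + 1 : ℕ) : ℕ∞) := by
    push_cast
    ring
  rw [hcast]
  exact add_le_add hx1 hS0

/-- For every finite undirected connected graph `G = (V,E)`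
without self-loops: `G` is not 3-colourable iff the bag certain answer
`q^{⟨T,A_G⟩}(r)` is at least `3·|V| + 2`. -/
theorem statement_14 (V : Finset ℕ) (E : Finset (ℕ × ℕ))
    (hVE : ∀ p ∈ E, p.1 ∈ V ∧ p.2 ∈ V)
    (hsym : ∀ p : ℕ × ℕ, p ∈ E ↔ (p.2, p.1) ∈ E)
    (hirr : ∀ v : ℕ, (v, v) ∉ E)
    (hconn : ∀ u ∈ V, ∀ v ∈ V, Relation.ReflTransGen (fun x y => (x, y) ∈ E) u v) :
    (¬ ∃ γ : ℕ → Fin 3, ∀ p ∈ E, γ p.1 ≠ γ p.2) ↔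
      ((3 * V.card + 2 : ℕ) : ℕ∞) ≤ bagCertain ⟨tbox14, abox14 V E⟩ q14 [1] := by
  constructor
  · intro hnc
    exact le_iInf fun I => le_iInf fun hI => lower_bound V E hVE hnc I hI
  · rintro hle ⟨γ, hγ⟩
    have h1 : bagCertain ⟨tbox14, abox14 V E⟩ q14 [1] ≤ ((3 * V.card + 1 : ℕ) : ℕ∞) :=
      le_trans (iInf₂_le (modelI V E γ) (modelI_isModel V E γ)) (upper_bound V E γ hγ)
    have h2 := le_trans hle h1
    have h3 := Nat.cast_le.mp h2
    omega
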